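/- Let f : 2^E → ℝ be a monotone nondecreasing submodular function on a finite ground set E with f(∅) = 0 and nonnegative values, and let κ ∈ [0,1] be such that f(A ∪ {e}) − f(A) ≥ (1 − κ)·f({e}) for all A ⊆ E and e ∉ A. Define l(A) = (1 − κ)·Σ_{e∈A} f({e}) and g = f − l. Then g is monotone nondecreasing, nonnegative, and submodular, and moreover g(A) ≤ κ·f(A) for every A ⊆ E. -/

import Mathlib

open Finset

theorem stmt_16 {E : Type*} [Fintype E] [DecidableEq E]
    (f : Finset E → ℝ)
    (hmono : ∀ A B : Finset E, A ⊆ B → f A ≤ f B)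
    (hsub : ∀ A B : Finset E, f A + f B ≥ f (A ∪ B) + f (A ∩ B))
    (hempty : f ∅ = 0) (hnonneg : ∀ A : Finset E, 0 ≤ f A)
    (κ : ℝ) (hκ0 : 0 ≤ κ) (hκ1 : κ ≤ 1)
    (hcurv : ∀ A : Finset E, ∀ e ∉ A, f (insert e A) - f A ≥ (1 - κ) * f {e})
    (l : Finset E → ℝ) (hl : ∀ A : Finset E, l A = (1 - κ) * ∑ e ∈ A, f {e})
    (g : Finset E → ℝ) (hg : ∀ A : Finset E, g A = f A - l A) :
    (∀ A B : Finset E, A ⊆ B → g A ≤ g B) ∧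
    (∀ A : Finset E, 0 ≤ g A) ∧
    (∀ A B : Finset E, g A + g B ≥ g (A ∪ B) + g (A ∩ B)) ∧
    (∀ A : Finset E, g A ≤ κ * f A) := by
  -- one-step monotonicity of g
  have gstep : ∀ (A : Finset E) (e : E), g A ≤ g (insert e A) := by
    intro A e
    by_cases he : e ∈ A
    · simp [Finset.insert_eq_self.mpr he]
    · have h1 := hcurv A e he
      have h2 : l (insert e A) = (1 - κ) * f {e} + l A := by
        rw [hl, hl, Finset.sum_insert he, mul_add]
      rw [hg, hg, h2]
      linarith
  -- union monotonicity
  have gmono : ∀ A B : Finset E, A ⊆ B → g A ≤ g B := by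
    intro A B hAB
    have : ∀ S A : Finset E, g A ≤ g (A ∪ S) := by
      intro S
      induction S using Finset.induction_on with
      | empty => intro A; simp
      | insert _ _ he ih =>
        intro A
        rw [Finset.union_insert]
        exact le_trans (ih A) (gstep _ _)
    calc g A ≤ g (A ∪ B) := this B A
      _ = g B := by rw [Finset.union_eq_right.mpr hAB]
  have gempty : g ∅ = 0 := by simp [hg, hl, hempty]
  refine ⟨gmono, ?_, ?_, ?_⟩
  · intro A
    have := gmono ∅ A (Finset.empty_subset A)
    linarith [gempty ▸ this]
  · intro A B
    have hmod : l A + l B = l (A ∪ B) + l (A ∩ B) := by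
      simp only [hl]
      rw [← mul_add, ← mul_add, Finset.sum_union_inter]
    simp only [hg]
    have := hsub A B
    linarith
  · intro A
    have hsubadd : ∀ A : Finset E, f A ≤ ∑ e ∈ A, f {e} := by
      intro A
      induction A using Finset.induction_on with
      | empty => simp [hempty]
      | @insert a s ha ih =>
        rw [Finset.sum_insert ha]
        have h := hsub {a} s
        have h2 : f ({a} ∪ s) = f (insert a s) := by rw [Finset.insert_eq]
        have h3 := hnonneg ({a} ∩ s)
        linarith
    rw [hg, hl]
    have := hsubadd A
    nlinarith [hnonneg A]
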